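/- Composition of off-diagonal estimates: let n ≥ 1 and 1 ≤ p ≤ q ≤ r ≤ ∞, and let (T_t)_{t>0} and (S_t)_{t>0} be families of bounded linear operators on L²(ℝⁿ). Suppose (T_t) satisfies L^p–L^q off-diagonal estimates: there are C₁, c₁ > 0 such that for all closed sets E, F ⊂ ℝⁿ, all t > 0, and all h ∈ L^p ∩ L² supported in E, ‖T_t h‖_{L^q(F)} ≤ C₁ t^{−γ_{pq}/2} e^{−c₁ d(E,F)²/t} ‖h‖_p; and suppose (S_t) satisfies L^q–L^r off-diagonal estimates with constants C₂, c₂, where in addition S_t is defined on L^q ∩ L². Then the family (S_t T_t)_{t>0} satisfies L^p–L^r off-diagonal estimates: there are C, c > 0, depending only on n, p, q, r, C₁, c₁, C₂, c₂, such that for all closed sets E, F, all t > 0, and all h ∈ L^p ∩ L² supported in E, ‖S_t T_t h‖_{L^r(F)} ≤ C t^{−γ_{pr}/2} e^{−c·d(E,F)²/t} ‖h‖_p. -/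

import Mathlib

open MeasureTheory ENNReal

noncomputable section

/-- The (Euclidean) distance between two sets, `d(E,F) = inf {dist x y : x ∈ E, y ∈ F}`. -/
noncomputable def setDist {n : ℕ} (E F : Set (EuclideanSpace ℝ (Fin n))) : ℝ :=
  sInf (Set.image2 dist E F)


section Helpers

private lemma setDist_nonneg'' {n : ℕ} (E F : Set (EuclideanSpace ℝ (Fin n))) :
    0 ≤ setDist E F :=
  Real.sInf_nonneg (by rintro x ⟨a, _, b, _, rfl⟩; exact dist_nonneg)

private lemma setDist_le_dist' {n : ℕ} {E F : Set (EuclideanSpace ℝ (Fin n))}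
    {x y : EuclideanSpace ℝ (Fin n)} (hx : x ∈ E) (hy : y ∈ F) :
    setDist E F ≤ dist x y :=
  csInf_le ⟨0, by rintro z ⟨a, _, b, _, rfl⟩; exact dist_nonneg⟩
    (Set.mem_image2_of_mem hx hy)

private lemma le_setDist' {n : ℕ} {E F : Set (EuclideanSpace ℝ (Fin n))} {a : ℝ}
    (hE : E.Nonempty) (hF : F.Nonempty)
    (h : ∀ x ∈ E, ∀ y ∈ F, a ≤ dist x y) : a ≤ setDist E F :=
  le_csInf (hE.image2 hF) (by rintro z ⟨x, hx, y, hy, rfl⟩; exact h x hx y hy)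

private lemma setDist_univ' {n : ℕ} {E : Set (EuclideanSpace ℝ (Fin n))} (hE : E.Nonempty) :
    setDist E Set.univ = 0 := by
  obtain ⟨x, hx⟩ := hE
  refine le_antisymm ?_ (setDist_nonneg'' _ _)
  simpa using setDist_le_dist' hx (Set.mem_univ x)

private lemma le_infDist' {α : Type*} [MetricSpace α] {s : Set α} {x : α} {b : ℝ}
    (hs : s.Nonempty) (h : ∀ y ∈ s, b ≤ dist x y) : b ≤ Metric.infDist x s := by
  rw [Metric.infDist_eq_iInf]
  haveI : Nonempty s := hs.to_subtype
  exact le_ciInf fun y => h y y.2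

private lemma div_toReal_anti {n : ℝ} (hn : 0 ≤ n) {p q : ℝ≥0∞} (hp : 1 ≤ p) (hpq : p ≤ q) :
    n / q.toReal ≤ n / p.toReal := by
  rcases eq_or_ne q ∞ with rfl | hq
  · have h0 : n / (⊤ : ℝ≥0∞).toReal = 0 := by norm_num
    rw [h0]
    exact div_nonneg hn ENNReal.toReal_nonneg
  · have hp' : p ≠ ∞ := (hpq.trans_lt (lt_top_iff_ne_top.mpr hq)).ne
    have h1 : (1 : ℝ) ≤ p.toReal := by
      rw [← ENNReal.toReal_one]; exact ENNReal.toReal_mono hp' hp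
    have h2 : p.toReal ≤ q.toReal := ENNReal.toReal_mono hq hpq
    gcongr

end Helpers

set_option maxHeartbeats 2000000 in
/-- Composition of off-diagonal estimates: if `1 ≤ p ≤ q ≤ r ≤ ∞`, `(T_t)_{t>0}` satisfies
`L^p–L^q` off-diagonal estimates (constants `C₁, c₁`) and `(S_t)_{t>0}` satisfies `L^q–L^r`
off-diagonal estimates (constants `C₂, c₂`), both being families of bounded linear operators
on `L²`, then `(S_t T_t)_{t>0}` satisfies `L^p–L^r` off-diagonal estimates with constants
`C, c` depending only on `n`, `p`, `q`, `r`, `C₁`, `c₁`, `C₂`, `c₂`.  Here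
`γ_{pq} = |n/q − n/p|`. -/
theorem off_diagonal_composition
    (n : ℕ) (hn : 1 ≤ n) (p q r : ℝ≥0∞) (hp : 1 ≤ p) (hpq : p ≤ q) (hqr : q ≤ r)
    (C₁ c₁ C₂ c₂ : ℝ) (hC₁ : 0 < C₁) (hc₁ : 0 < c₁) (hC₂ : 0 < C₂) (hc₂ : 0 < c₂) :
    ∃ C c : ℝ, 0 < C ∧ 0 < c ∧
      ∀ (T S : ℝ → (EuclideanSpace ℝ (Fin n) → ℝ) → (EuclideanSpace ℝ (Fin n) → ℝ)),
        -- `(T_t)` and `(S_t)` are families of bounded linear operators on `L²`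
        (∀ t : ℝ, 0 < t → IsLinearMap ℝ (T t)) →
        (∀ t : ℝ, 0 < t → IsLinearMap ℝ (S t)) →
        (∀ t : ℝ, 0 < t → ∃ M : ℝ≥0∞, M ≠ ∞ ∧ ∀ h, MemLp h 2 volume →
          MemLp (T t h) 2 volume ∧ eLpNorm (T t h) 2 volume ≤ M * eLpNorm h 2 volume) →
        (∀ t : ℝ, 0 < t → ∃ M : ℝ≥0∞, M ≠ ∞ ∧ ∀ h, MemLp h 2 volume →
          MemLp (S t h) 2 volume ∧ eLpNorm (S t h) 2 volume ≤ M * eLpNorm h 2 volume) →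
        -- `(T_t)` satisfies `L^p–L^q` off-diagonal estimates
        (∀ E F : Set (EuclideanSpace ℝ (Fin n)), IsClosed E → IsClosed F →
          ∀ t : ℝ, 0 < t →
          ∀ h : EuclideanSpace ℝ (Fin n) → ℝ, MemLp h p volume → MemLp h 2 volume →
            Function.support h ⊆ E →
            eLpNorm (T t h) q (volume.restrict F) ≤
              ENNReal.ofReal (C₁ * t ^ (-|(n : ℝ) / q.toReal - (n : ℝ) / p.toReal| / 2) *
                  Real.exp (-(c₁ * setDist E F ^ 2) / t)) * eLpNorm h p volume) →
        -- `(S_t)` satisfies `L^q–L^r` off-diagonal estimates, `S_t` defined on `L^q ∩ L²`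
        (∀ E F : Set (EuclideanSpace ℝ (Fin n)), IsClosed E → IsClosed F →
          ∀ t : ℝ, 0 < t →
          ∀ h : EuclideanSpace ℝ (Fin n) → ℝ, MemLp h q volume → MemLp h 2 volume →
            Function.support h ⊆ E →
            eLpNorm (S t h) r (volume.restrict F) ≤
              ENNReal.ofReal (C₂ * t ^ (-|(n : ℝ) / r.toReal - (n : ℝ) / q.toReal| / 2) *
                  Real.exp (-(c₂ * setDist E F ^ 2) / t)) * eLpNorm h q volume) →
        -- conclusion: `(S_t T_t)` satisfies `L^p–L^r` off-diagonal estimates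
        ∀ E F : Set (EuclideanSpace ℝ (Fin n)), IsClosed E → IsClosed F →
          ∀ t : ℝ, 0 < t →
          ∀ h : EuclideanSpace ℝ (Fin n) → ℝ, MemLp h p volume → MemLp h 2 volume →
            Function.support h ⊆ E →
            eLpNorm (S t (T t h)) r (volume.restrict F) ≤
              ENNReal.ofReal (C * t ^ (-|(n : ℝ) / r.toReal - (n : ℝ) / p.toReal| / 2) *
                  Real.exp (-(c * setDist E F ^ 2) / t)) * eLpNorm h p volume := by
  classical
  set γ₁ : ℝ := |(n : ℝ) / q.toReal - (n : ℝ) / p.toReal| with hγ₁def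
  set γ₂ : ℝ := |(n : ℝ) / r.toReal - (n : ℝ) / q.toReal| with hγ₂def
  set γ : ℝ := |(n : ℝ) / r.toReal - (n : ℝ) / p.toReal| with hγdef
  have hn0 : (0 : ℝ) ≤ (n : ℝ) := Nat.cast_nonneg n
  have hba : (n : ℝ) / q.toReal ≤ (n : ℝ) / p.toReal := div_toReal_anti hn0 hp hpq
  have hcb : (n : ℝ) / r.toReal ≤ (n : ℝ) / q.toReal :=
    div_toReal_anti hn0 (hp.trans hpq) hqr
  have hγsum : γ = γ₁ + γ₂ := by
    rw [hγdef, hγ₁def, hγ₂def, abs_of_nonpos (by linarith), abs_of_nonpos (by linarith),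
      abs_of_nonpos (by linarith)]
    ring
  set c : ℝ := min c₁ c₂ / 4 with hcdef
  have hc : 0 < c := by positivity
  refine ⟨2 * C₁ * C₂, c, by positivity, hc, ?_⟩
  intro T S hTlin hSlin hTb hSb hT hS E F hEc hFc t ht h hhp hh2 hsupp
  have hr1 : (1 : ℝ≥0∞) ≤ r := hp.trans (hpq.trans hqr)
  -- trivial case : E empty
  rcases E.eq_empty_or_nonempty with rfl | hEne
  · have hh0 : h = 0 := by
      funext x
      by_contra hx
      exact (hsupp (Function.mem_support.mpr hx)).elim
    rw [hh0, (hTlin t ht).map_zero, (hSlin t ht).map_zero, eLpNorm_zero]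
    exact zero_le
  -- trivial case : F empty
  rcases F.eq_empty_or_nonempty with rfl | hFne
  · rw [Measure.restrict_empty, eLpNorm_measure_zero]
    exact zero_le
  set D : ℝ := setDist E F with hDdef
  have hD0 : 0 ≤ D := setDist_nonneg'' E F
  set G : Set (EuclideanSpace ℝ (Fin n)) := {x | Metric.infDist x E ≤ D / 2} with hGdef
  have hGclosed : IsClosed G :=
    isClosed_le (Metric.continuous_infDist_pt E) continuous_const
  set G' : Set (EuclideanSpace ℝ (Fin n)) := {x | D / 2 ≤ Metric.infDist x E} with hG'def
  have hG'closed : IsClosed G' :=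
    isClosed_le continuous_const (Metric.continuous_infDist_pt E)
  have hGm : MeasurableSet G := hGclosed.measurableSet
  have hGcm : MeasurableSet Gᶜ := hGm.compl
  have hGcsub : Gᶜ ⊆ G' := by
    intro x hx
    simp only [hG'def, Set.mem_setOf_eq]
    by_contra h'
    exact hx (by simp only [hGdef, Set.mem_setOf_eq]; linarith)
  have hGne : G.Nonempty := by
    obtain ⟨x, hx⟩ := hEne
    exact ⟨x, by simp only [hGdef, Set.mem_setOf_eq, Metric.infDist_zero_of_mem hx]; linarith⟩
  have hG'ne : G'.Nonempty := by
    obtain ⟨y, hy⟩ := hFne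
    refine ⟨y, ?_⟩
    simp only [hG'def, Set.mem_setOf_eq]
    have : D ≤ Metric.infDist y E :=
      le_infDist' hEne fun z hz => by
        have := setDist_le_dist' hz hy
        rwa [dist_comm]
    linarith
  have hdGF : D / 2 ≤ setDist G F := by
    refine le_setDist' hGne hFne fun x hx y hy => ?_
    have h1 : D - dist x y ≤ Metric.infDist x E := by
      refine le_infDist' hEne fun z hz => ?_
      have h2 : D ≤ dist z y := setDist_le_dist' hz hy
      have h3 : dist z y ≤ dist z x + dist x y := dist_triangle z x y
      have h4 : dist x z = dist z x := dist_comm x z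
      linarith
    have hx' : Metric.infDist x E ≤ D / 2 := hx
    linarith
  have hdEG' : D / 2 ≤ setDist E G' := by
    refine le_setDist' hEne hG'ne fun z hz x hx => ?_
    have h1 : Metric.infDist x E ≤ dist x z := Metric.infDist_le_dist_of_mem hz
    have hx' : D / 2 ≤ Metric.infDist x E := hx
    rw [dist_comm]
    linarith
  -- `g = T t h`
  set g : EuclideanSpace ℝ (Fin n) → ℝ := T t h with hgdef
  obtain ⟨M, hM, hMspec⟩ := hTb t ht
  obtain ⟨M', hM', hM'spec⟩ := hSb t ht
  have hg2 : MemLp g 2 volume := (hMspec h hh2).1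
  have hgq_est : eLpNorm g q volume ≤
      ENNReal.ofReal (C₁ * t ^ (-γ₁ / 2) *
        Real.exp (-(c₁ * setDist E Set.univ ^ 2) / t)) * eLpNorm h p volume := by
    have := hT E Set.univ hEc isClosed_univ t ht h hhp hh2 hsupp
    rwa [Measure.restrict_univ] at this
  have hgq_est' : eLpNorm g q volume ≤
      ENNReal.ofReal (C₁ * t ^ (-γ₁ / 2)) * eLpNorm h p volume := by
    rw [setDist_univ' hEne] at hgq_est
    simpa using hgq_est
  have hgq : MemLp g q volume :=
    ⟨hg2.1, lt_of_le_of_lt hgq_est'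
      (ENNReal.mul_lt_top ENNReal.ofReal_lt_top hhp.2)⟩
  set i₁ : EuclideanSpace ℝ (Fin n) → ℝ := G.indicator g with hi₁def
  set i₂ : EuclideanSpace ℝ (Fin n) → ℝ := Gᶜ.indicator g with hi₂def
  have hi₁q : MemLp i₁ q volume := hgq.indicator hGm
  have hi₁2 : MemLp i₁ 2 volume := hg2.indicator hGm
  have hi₂q : MemLp i₂ q volume := hgq.indicator hGcm
  have hi₂2 : MemLp i₂ 2 volume := hg2.indicator hGcm
  have hsplit : S t g = S t i₁ + S t i₂ := by
    conv_lhs => rw [← Set.indicator_self_add_compl G g]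
    exact (hSlin t ht).map_add i₁ i₂
  -- measurability of the two pieces
  have hA1 : AEStronglyMeasurable (S t i₁) (volume.restrict F) :=
    ((hM'spec i₁ hi₁2).1.1).restrict
  have hA2 : AEStronglyMeasurable (S t i₂) (volume.restrict F) :=
    ((hM'spec i₂ hi₂2).1.1).restrict
  -- S-estimates for the two pieces
  have est1 : eLpNorm (S t i₁) r (volume.restrict F) ≤
      ENNReal.ofReal (C₂ * t ^ (-γ₂ / 2) *
        Real.exp (-(c₂ * setDist G F ^ 2) / t)) * eLpNorm i₁ q volume :=
    hS G F hGclosed hFc t ht i₁ hi₁q hi₁2 Set.support_indicator_subset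
  have est2 : eLpNorm (S t i₂) r (volume.restrict F) ≤
      ENNReal.ofReal (C₂ * t ^ (-γ₂ / 2) *
        Real.exp (-(c₂ * setDist G' F ^ 2) / t)) * eLpNorm i₂ q volume :=
    hS G' F hG'closed hFc t ht i₂ hi₂q hi₂2 (Set.support_indicator_subset.trans hGcsub)
  -- q-norm bounds for the two pieces
  have hb1 : eLpNorm i₁ q volume ≤ ENNReal.ofReal (C₁ * t ^ (-γ₁ / 2)) * eLpNorm h p volume :=
    (eLpNorm_indicator_le g).trans hgq_est'
  have hb2 : eLpNorm i₂ q volume ≤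
      ENNReal.ofReal (C₁ * t ^ (-γ₁ / 2) *
        Real.exp (-(c₁ * setDist E G' ^ 2) / t)) * eLpNorm h p volume := by
    calc eLpNorm i₂ q volume = eLpNorm g q (volume.restrict Gᶜ) :=
          eLpNorm_indicator_eq_eLpNorm_restrict hGcm
      _ ≤ eLpNorm g q (volume.restrict G') :=
          eLpNorm_mono_measure g (Measure.restrict_mono hGcsub le_rfl)
      _ ≤ _ := hT E G' hEc hG'closed t ht h hhp hh2 hsupp
  -- the target real constant
  set K : ℝ := C₁ * C₂ * t ^ (-γ / 2) * Real.exp (-(c * D ^ 2) / t) with hKdef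
  have hK0 : 0 ≤ K := by positivity
  have hrpow : t ^ (-γ₂ / 2) * t ^ (-γ₁ / 2) = t ^ (-γ / 2) := by
    rw [← Real.rpow_add ht]
    congr 1
    rw [hγsum]; ring
  -- real-number comparisons
  have key1 : C₂ * t ^ (-γ₂ / 2) * Real.exp (-(c₂ * setDist G F ^ 2) / t) *
      (C₁ * t ^ (-γ₁ / 2)) ≤ K := by
    have hsq : (D / 2) ^ 2 ≤ setDist G F ^ 2 := pow_le_pow_left₀ (by linarith) hdGF 2
    have hexp : Real.exp (-(c₂ * setDist G F ^ 2) / t) ≤ Real.exp (-(c * D ^ 2) / t) := by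
      apply Real.exp_le_exp.mpr
      have hnum : c * D ^ 2 ≤ c₂ * setDist G F ^ 2 := by
        have h1 : c₂ * (D / 2) ^ 2 ≤ c₂ * setDist G F ^ 2 := by gcongr
        have h2 : c * D ^ 2 ≤ c₂ * (D / 2) ^ 2 := by
          have hmm : min c₁ c₂ * D ^ 2 ≤ c₂ * D ^ 2 :=
            mul_le_mul_of_nonneg_right (min_le_right c₁ c₂) (sq_nonneg D)
          rw [hcdef]
          nlinarith [hmm]
        linarith
      exact (div_le_div_iff_of_pos_right ht).mpr (neg_le_neg hnum)
    calc C₂ * t ^ (-γ₂ / 2) * Real.exp (-(c₂ * setDist G F ^ 2) / t) * (C₁ * t ^ (-γ₁ / 2))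
        = C₁ * C₂ * (t ^ (-γ₂ / 2) * t ^ (-γ₁ / 2)) *
            Real.exp (-(c₂ * setDist G F ^ 2) / t) := by ring
      _ = C₁ * C₂ * t ^ (-γ / 2) * Real.exp (-(c₂ * setDist G F ^ 2) / t) := by rw [hrpow]
      _ ≤ K := by rw [hKdef]; gcongr
  have key2 : C₂ * t ^ (-γ₂ / 2) * Real.exp (-(c₂ * setDist G' F ^ 2) / t) *
      (C₁ * t ^ (-γ₁ / 2) * Real.exp (-(c₁ * setDist E G' ^ 2) / t)) ≤ K := by
    have hsq : (D / 2) ^ 2 ≤ setDist E G' ^ 2 := pow_le_pow_left₀ (by linarith) hdEG' 2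
    have hnum : c * D ^ 2 ≤ c₁ * setDist E G' ^ 2 := by
      have h1 : c₁ * (D / 2) ^ 2 ≤ c₁ * setDist E G' ^ 2 := by gcongr
      have h2 : c * D ^ 2 ≤ c₁ * (D / 2) ^ 2 := by
        have hmm : min c₁ c₂ * D ^ 2 ≤ c₁ * D ^ 2 :=
          mul_le_mul_of_nonneg_right (min_le_left c₁ c₂) (sq_nonneg D)
        rw [hcdef]
        nlinarith [hmm]
      linarith
    have hexp1 : Real.exp (-(c₁ * setDist E G' ^ 2) / t) ≤ Real.exp (-(c * D ^ 2) / t) :=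
      Real.exp_le_exp.mpr ((div_le_div_iff_of_pos_right ht).mpr (neg_le_neg hnum))
    have hexp2 : Real.exp (-(c₂ * setDist G' F ^ 2) / t) ≤ 1 := by
      rw [Real.exp_le_one_iff]
      exact div_nonpos_of_nonpos_of_nonneg
        (neg_nonpos.mpr (mul_nonneg hc₂.le (sq_nonneg _))) ht.le
    have htγ : (0:ℝ) ≤ t ^ (-γ / 2) := Real.rpow_nonneg ht.le _
    calc C₂ * t ^ (-γ₂ / 2) * Real.exp (-(c₂ * setDist G' F ^ 2) / t) *
        (C₁ * t ^ (-γ₁ / 2) * Real.exp (-(c₁ * setDist E G' ^ 2) / t))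
        = C₁ * C₂ * (t ^ (-γ₂ / 2) * t ^ (-γ₁ / 2)) *
            (Real.exp (-(c₂ * setDist G' F ^ 2) / t) *
              Real.exp (-(c₁ * setDist E G' ^ 2) / t)) := by ring
      _ = C₁ * C₂ * t ^ (-γ / 2) *
            (Real.exp (-(c₂ * setDist G' F ^ 2) / t) *
              Real.exp (-(c₁ * setDist E G' ^ 2) / t)) := by rw [hrpow]
      _ ≤ C₁ * C₂ * t ^ (-γ / 2) * (1 * Real.exp (-(c * D ^ 2) / t)) := by
          refine mul_le_mul_of_nonneg_left ?_ (by positivity)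
          exact mul_le_mul hexp2 hexp1 (Real.exp_pos _).le zero_le_one
      _ = K := by rw [hKdef]; ring
  -- assemble the two halves
  have half1 : eLpNorm (S t i₁) r (volume.restrict F) ≤
      ENNReal.ofReal K * eLpNorm h p volume := by
    have hA0 : (0:ℝ) ≤ C₂ * t ^ (-γ₂ / 2) * Real.exp (-(c₂ * setDist G F ^ 2) / t) :=
      mul_nonneg (mul_nonneg hC₂.le (Real.rpow_nonneg ht.le _)) (Real.exp_pos _).le
    calc eLpNorm (S t i₁) r (volume.restrict F)
        ≤ ENNReal.ofReal (C₂ * t ^ (-γ₂ / 2) *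
            Real.exp (-(c₂ * setDist G F ^ 2) / t)) * eLpNorm i₁ q volume := est1
      _ ≤ ENNReal.ofReal (C₂ * t ^ (-γ₂ / 2) * Real.exp (-(c₂ * setDist G F ^ 2) / t)) *
            (ENNReal.ofReal (C₁ * t ^ (-γ₁ / 2)) * eLpNorm h p volume) :=
          mul_le_mul_right hb1 _
      _ = ENNReal.ofReal (C₂ * t ^ (-γ₂ / 2) * Real.exp (-(c₂ * setDist G F ^ 2) / t) *
            (C₁ * t ^ (-γ₁ / 2))) * eLpNorm h p volume := by
          rw [← mul_assoc, ← ENNReal.ofReal_mul hA0]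
      _ ≤ ENNReal.ofReal K * eLpNorm h p volume :=
          mul_le_mul_left (ENNReal.ofReal_le_ofReal key1) _
  have half2 : eLpNorm (S t i₂) r (volume.restrict F) ≤
      ENNReal.ofReal K * eLpNorm h p volume := by
    have hA0 : (0:ℝ) ≤ C₂ * t ^ (-γ₂ / 2) * Real.exp (-(c₂ * setDist G' F ^ 2) / t) :=
      mul_nonneg (mul_nonneg hC₂.le (Real.rpow_nonneg ht.le _)) (Real.exp_pos _).le
    calc eLpNorm (S t i₂) r (volume.restrict F)
        ≤ ENNReal.ofReal (C₂ * t ^ (-γ₂ / 2) *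
            Real.exp (-(c₂ * setDist G' F ^ 2) / t)) * eLpNorm i₂ q volume := est2
      _ ≤ ENNReal.ofReal (C₂ * t ^ (-γ₂ / 2) * Real.exp (-(c₂ * setDist G' F ^ 2) / t)) *
            (ENNReal.ofReal (C₁ * t ^ (-γ₁ / 2) *
              Real.exp (-(c₁ * setDist E G' ^ 2) / t)) * eLpNorm h p volume) :=
          mul_le_mul_right hb2 _
      _ = ENNReal.ofReal (C₂ * t ^ (-γ₂ / 2) * Real.exp (-(c₂ * setDist G' F ^ 2) / t) *
            (C₁ * t ^ (-γ₁ / 2) * Real.exp (-(c₁ * setDist E G' ^ 2) / t))) *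
            eLpNorm h p volume := by
          rw [← mul_assoc, ← ENNReal.ofReal_mul hA0]
      _ ≤ ENNReal.ofReal K * eLpNorm h p volume :=
          mul_le_mul_left (ENNReal.ofReal_le_ofReal key2) _
  calc eLpNorm (S t g) r (volume.restrict F)
      = eLpNorm (S t i₁ + S t i₂) r (volume.restrict F) := by rw [hsplit]
    _ ≤ eLpNorm (S t i₁) r (volume.restrict F) + eLpNorm (S t i₂) r (volume.restrict F) :=
        eLpNorm_add_le hA1 hA2 hr1
    _ ≤ ENNReal.ofReal K * eLpNorm h p volume + ENNReal.ofReal K * eLpNorm h p volume :=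
        add_le_add half1 half2
    _ = ENNReal.ofReal (2 * C₁ * C₂ * t ^ (-γ / 2) *
          Real.exp (-(c * D ^ 2) / t)) * eLpNorm h p volume := by
        rw [← add_mul, ← ENNReal.ofReal_add hK0 hK0]
        congr 2
        rw [hKdef]; ring
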